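/- The three-dimensional crumbling map commutes with the boundary and the intersection product: for every k ≥ 1, the ℚ-linear map ι₃ : E3_N → E3_{N·k} defined on basis triples by ι₃(u₁, u₂, u₃) = ι(u₁) ⊗ ι(u₂) ⊗ ι(u₃) satisfies ι₃(∂₃ x) = ∂₃(ι₃ x) and ι₃(μ₃(x, y)) = μ₃(ι₃ x, ι₃ y) for all x, y ∈ E3_N. -/

import Mathlib

/-- Basis elements of the one-dimensional enlarged complex of period `N`:
points `P a`, elemental sticks `S a` (the interval `[a, a+1]`), and
infinitesimal sticks `I a`. -/
inductive B (N : ℕ) : Type where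
  | P : ZMod N → B N
  | S : ZMod N → B N
  | I : ZMod N → B N
  deriving DecidableEq

/-- The enlarged one-dimensional chain complex: the free ℚ-vector space on `B N`. -/
abbrev EC (N : ℕ) : Type := B N →₀ ℚ

namespace B

variable {N : ℕ}

/-- Codimension: 1 for points, 0 for sticks and infinitesimal sticks. -/
def cod : B N → ℕ
  | P _ => 1
  | _ => 0

/-- Basis element viewed in `EC N`. -/
noncomputable def e (u : B N) : EC N := Finsupp.single u 1

/-- The transverse intersection product on basis elements. -/
noncomputable def muB : B N → B N → EC N
  | P _, P _ => 0
  | P a, S b => if b = a ∨ b = a - 1 then Finsupp.single (P a) (1/2) else 0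
  | S b, P a => if b = a ∨ b = a - 1 then Finsupp.single (P a) (1/2) else 0
  | P a, I b => if b = a then Finsupp.single (P a) (1/4) else 0
  | I b, P a => if b = a then Finsupp.single (P a) (1/4) else 0
  | S a, S b =>
      if b = a then
        Finsupp.single (I a) (-1) + Finsupp.single (S a) 1 + Finsupp.single (I (a+1)) (-1)
      else if b = a + 1 then Finsupp.single (I (a+1)) 1
      else if b = a - 1 then Finsupp.single (I a) 1
      else 0
  | S a, I b => if b = a ∨ b = a + 1 then Finsupp.single (I b) (1/2) else 0
  | I b, S a => if b = a ∨ b = a + 1 then Finsupp.single (I b) (1/2) else 0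
  | I a, I b => if b = a then Finsupp.single (I a) (1/4) else 0

/-- Boundary on basis elements: `∂ (S a) = P (a+1) - P a`, zero otherwise. -/
noncomputable def bdB : B N → EC N
  | S a => Finsupp.single (P (a+1)) 1 - Finsupp.single (P a) 1
  | _ => 0

/-- Augmentation on basis elements. -/
def epsB : B N → ℚ
  | P _ => 1
  | _ => 0

end B

/-- Bilinear extension of the basis product to `EC N`. -/
noncomputable def mu {N : ℕ} (x y : EC N) : EC N :=
  x.sum fun u cu => y.sum fun v cv => (cu * cv) • B.muB u v

/-- Linear extension of the boundary to `EC N`. -/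
noncomputable def bd {N : ℕ} (x : EC N) : EC N := x.sum fun u cu => cu • B.bdB u

/-- Augmentation `ε : EC N → ℚ`. -/
noncomputable def eps {N : ℕ} (x : EC N) : ℚ := x.sum fun u cu => cu * B.epsB u

/-- The augmentation pairing `⟨x, y⟩ = ε (μ x y)`. -/
noncomputable def pair {N : ℕ} (x y : EC N) : ℚ := eps (mu x y)

/-- The subcomplex `C_N` spanned by points and elemental sticks. -/
noncomputable def Csub (N : ℕ) : Submodule ℚ (EC N) :=
  Submodule.span ℚ
    (Set.range (fun a : ZMod N => Finsupp.single (B.P a) (1 : ℚ)) ∪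
     Set.range (fun a : ZMod N => Finsupp.single (B.S a) (1 : ℚ)))

/-- Basis triples for the three-dimensional complex. -/
abbrev B3 (N : ℕ) : Type := B N × B N × B N

/-- The enlarged three-dimensional chain complex: free ℚ-vector space on `B3 N`. -/
abbrev E3 (N : ℕ) : Type := B3 N →₀ ℚ

/-- Codimension of a basis triple. -/
def cod3 {N : ℕ} (u : B3 N) : ℕ := u.1.cod + u.2.1.cod + u.2.2.cod

/-- Basis triple viewed in `E3 N`. -/
noncomputable def e3 {N : ℕ} (u : B3 N) : E3 N := Finsupp.single u 1

/-- Trilinear map `EC N → EC N → EC N → E3 N`, `x ⊗ y ⊗ z`. -/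
noncomputable def t3 {N : ℕ} (x y z : EC N) : E3 N :=
  x.sum fun u₁ c₁ => y.sum fun u₂ c₂ => z.sum fun u₃ c₃ =>
    Finsupp.single (u₁, u₂, u₃) (c₁ * c₂ * c₃)

/-- The three-dimensional intersection product on basis triples, with Koszul sign. -/
noncomputable def mu3B {N : ℕ} (u v : B3 N) : E3 N :=
  ((-1 : ℚ) ^ (u.2.1.cod * v.1.cod + u.2.2.cod * v.1.cod + u.2.2.cod * v.2.1.cod)) •
    t3 (B.muB u.1 v.1) (B.muB u.2.1 v.2.1) (B.muB u.2.2 v.2.2)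

/-- Bilinear extension of the three-dimensional product to `E3 N`. -/
noncomputable def mu3 {N : ℕ} (x y : E3 N) : E3 N :=
  x.sum fun u cu => y.sum fun v cv => (cu * cv) • mu3B u v

/-- The three-dimensional boundary on basis triples. -/
noncomputable def bd3B {N : ℕ} (u : B3 N) : E3 N :=
  t3 (B.bdB u.1) (B.e u.2.1) (B.e u.2.2)
    + ((-1 : ℚ) ^ u.1.cod) • t3 (B.e u.1) (B.bdB u.2.1) (B.e u.2.2)
    + ((-1 : ℚ) ^ (u.1.cod + u.2.1.cod)) • t3 (B.e u.1) (B.e u.2.1) (B.bdB u.2.2)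

/-- Linear extension of the three-dimensional boundary to `E3 N`. -/
noncomputable def bd3 {N : ℕ} (x : E3 N) : E3 N := x.sum fun u cu => cu • bd3B u

/-- The three-dimensional augmentation `ε₃`. -/
noncomputable def eps3 {N : ℕ} (x : E3 N) : ℚ :=
  x.sum fun u cu => cu * (B.epsB u.1 * B.epsB u.2.1 * B.epsB u.2.2)

/-- The three-dimensional augmentation pairing. -/
noncomputable def pair3 {N : ℕ} (x y : E3 N) : ℚ := eps3 (mu3 x y)

/-- The well-defined map `ZMod N → ZMod (N·k)`, `[a] ↦ [k·a]`. -/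
def rho (N k : ℕ) (a : ZMod N) : ZMod (N * k) := ((k * a.val : ℕ) : ZMod (N * k))

/-- Crumbling on basis elements: points and infinitesimal sticks map to their images,
an elemental stick crumbles into `k` elemental sticks. -/
noncomputable def iotaB (N k : ℕ) : B N → EC (N * k)
  | .P a => Finsupp.single (.P (rho N k a)) 1
  | .I a => Finsupp.single (.I (rho N k a)) 1
  | .S a => ∑ j ∈ Finset.range k, Finsupp.single (.S (rho N k a + (j : ZMod (N * k)))) 1

/-- The crumbling chain map `EC N → EC (N·k)`. -/
noncomputable def iota (N k : ℕ) (x : EC N) : EC (N * k) :=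
  x.sum fun u cu => cu • iotaB N k u

/-- The three-dimensional crumbling chain map `E3 N → E3 (N·k)`. -/
noncomputable def iota3 (N k : ℕ) (x : E3 N) : E3 (N * k) :=
  x.sum fun u cu => cu • t3 (iotaB N k u.1) (iotaB N k u.2.1) (iotaB N k u.2.2)


/-! ### Linear map bundling -/

section Infra

variable {M : ℕ}

lemma lift_single' {α : Type*} {V : Type*} [AddCommMonoid V] [Module ℚ V]
    (f : α → V) (a : α) (c : ℚ) :
    Finsupp.lift V ℚ α f (Finsupp.single a c) = c • f a := by
  rw [Finsupp.lift_apply]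
  exact Finsupp.sum_single_index (zero_smul _ _)

lemma lift2_apply {α β : Type*} {V : Type*} [AddCommMonoid V] [Module ℚ V]
    (f : α → β → V) (x : α →₀ ℚ) (y : β →₀ ℚ) :
    (Finsupp.lift _ ℚ _ fun a => Finsupp.lift V ℚ β (f a)) x y
      = x.sum fun a c => y.sum fun b d => (c * d) • f a b := by
  rw [Finsupp.lift_apply, Finsupp.sum, LinearMap.coe_sum, Finset.sum_apply, Finsupp.sum]
  refine Finset.sum_congr rfl fun a _ => ?_
  rw [LinearMap.smul_apply, Finsupp.lift_apply, Finsupp.smul_sum]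
  simp [smul_smul]

lemma lift3_apply {α β γ : Type*} {V : Type*} [AddCommMonoid V] [Module ℚ V]
    (f : α → β → γ → V) (x : α →₀ ℚ) (y : β →₀ ℚ) (z : γ →₀ ℚ) :
    (Finsupp.lift _ ℚ _ fun a => Finsupp.lift _ ℚ _ fun b => Finsupp.lift V ℚ γ (f a b)) x y z
      = x.sum fun a c => y.sum fun b d => z.sum fun g e => (c * d * e) • f a b g := by
  rw [Finsupp.lift_apply, Finsupp.sum, LinearMap.coe_sum, Finset.sum_apply,
    LinearMap.coe_sum, Finset.sum_apply, Finsupp.sum]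
  refine Finset.sum_congr rfl fun a _ => ?_
  rw [LinearMap.smul_apply, LinearMap.smul_apply, lift2_apply, Finsupp.smul_sum]
  refine Finset.sum_congr rfl fun b _ => ?_
  beta_reduce
  rw [Finsupp.smul_sum]
  simp [smul_smul, mul_assoc]

noncomputable def bdL (M : ℕ) : EC M →ₗ[ℚ] EC M := Finsupp.lift _ ℚ _ B.bdB

lemma bd_eq (x : EC M) : bd x = bdL M x := by
  rw [bdL, Finsupp.lift_apply]; rfl

@[simp] lemma bdL_single (u : B M) (c : ℚ) :
    bdL M (Finsupp.single u c) = c • B.bdB u := lift_single' _ _ _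

noncomputable def iotaL (N k : ℕ) : EC N →ₗ[ℚ] EC (N * k) := Finsupp.lift _ ℚ _ (iotaB N k)

lemma iota_eq {N k : ℕ} (x : EC N) : iota N k x = iotaL N k x := by
  rw [iotaL, Finsupp.lift_apply]; rfl

@[simp] lemma iotaL_single {N k : ℕ} (u : B N) (c : ℚ) :
    iotaL N k (Finsupp.single u c) = c • iotaB N k u := lift_single' _ _ _

noncomputable def muL (M : ℕ) : EC M →ₗ[ℚ] EC M →ₗ[ℚ] EC M :=
  Finsupp.lift _ ℚ _ fun u => Finsupp.lift _ ℚ _ fun v => B.muB u v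

lemma mu_eq (x y : EC M) : mu x y = muL M x y := (lift2_apply _ _ _).symm

@[simp] lemma muL_single_single (u v : B M) (c d : ℚ) :
    muL M (Finsupp.single u c) (Finsupp.single v d) = (c * d) • B.muB u v := by
  rw [muL, lift_single', LinearMap.smul_apply, lift_single', smul_smul]

noncomputable def t3L (M : ℕ) : EC M →ₗ[ℚ] EC M →ₗ[ℚ] EC M →ₗ[ℚ] E3 M :=
  Finsupp.lift _ ℚ _ fun u₁ => Finsupp.lift _ ℚ _ fun u₂ => Finsupp.lift _ ℚ _ fun u₃ =>
    Finsupp.single (u₁, u₂, u₃) 1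

lemma t3_eq (x y z : EC M) : t3 x y z = t3L M x y z := by
  rw [t3L, lift3_apply, t3]
  refine Finset.sum_congr rfl fun u₁ _ => Finset.sum_congr rfl fun u₂ _ =>
    Finset.sum_congr rfl fun u₃ _ => ?_
  beta_reduce
  rw [Finsupp.smul_single, smul_eq_mul, mul_one]

@[simp] lemma t3L_single (u₁ u₂ u₃ : B M) (c₁ c₂ c₃ : ℚ) :
    t3L M (Finsupp.single u₁ c₁) (Finsupp.single u₂ c₂) (Finsupp.single u₃ c₃)
      = (c₁ * c₂ * c₃) • (Finsupp.single (u₁, u₂, u₃) 1 : E3 M) := by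
  rw [t3L, lift_single', LinearMap.smul_apply, LinearMap.smul_apply, lift_single',
    LinearMap.smul_apply, lift_single', smul_smul, smul_smul, mul_assoc]

noncomputable def bd3L (M : ℕ) : E3 M →ₗ[ℚ] E3 M := Finsupp.lift _ ℚ _ bd3B

lemma bd3_eq (x : E3 M) : bd3 x = bd3L M x := by
  rw [bd3L, Finsupp.lift_apply]; rfl

@[simp] lemma bd3L_single (u : B3 M) (c : ℚ) :
    bd3L M (Finsupp.single u c) = c • bd3B u := lift_single' _ _ _

noncomputable def mu3L (M : ℕ) : E3 M →ₗ[ℚ] E3 M →ₗ[ℚ] E3 M :=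
  Finsupp.lift _ ℚ _ fun u => Finsupp.lift _ ℚ _ fun v => mu3B u v

lemma mu3_eq (x y : E3 M) : mu3 x y = mu3L M x y := (lift2_apply _ _ _).symm

@[simp] lemma mu3L_single_single (u v : B3 M) (c d : ℚ) :
    mu3L M (Finsupp.single u c) (Finsupp.single v d) = (c * d) • mu3B u v := by
  rw [mu3L, lift_single', LinearMap.smul_apply, lift_single', smul_smul]

noncomputable def iota3L (N k : ℕ) : E3 N →ₗ[ℚ] E3 (N * k) :=
  Finsupp.lift _ ℚ _ fun u => t3 (iotaB N k u.1) (iotaB N k u.2.1) (iotaB N k u.2.2)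

lemma iota3_eq {N k : ℕ} (x : E3 N) : iota3 N k x = iota3L N k x := by
  rw [iota3L, Finsupp.lift_apply]; rfl

@[simp] lemma iota3L_single {N k : ℕ} (u : B3 N) (c : ℚ) :
    iota3L N k (Finsupp.single u c)
      = c • t3 (iotaB N k u.1) (iotaB N k u.2.1) (iotaB N k u.2.2) := lift_single' _ _ _

end Infra


/-! ### Arithmetic of the crumbling map -/

section Arith

variable {N k : ℕ}

lemma cast_k_mul_mod (m : ℕ) :
    ((k * (m % N) : ℕ) : ZMod (N * k)) = ((k * m : ℕ) : ZMod (N * k)) := by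
  conv_rhs => rw [← Nat.mod_add_div m N]
  have hz : ((N * k : ℕ) : ZMod (N * k)) = 0 := ZMod.natCast_self _
  push_cast
  push_cast at hz
  rw [mul_add, ← mul_assoc, mul_comm (k : ZMod (N * k)) (N : ZMod (N * k)), hz]
  ring

lemma rho_add_one (hN : 3 ≤ N) (hk : 1 ≤ k) (a : ZMod N) :
    rho N k (a + 1) = rho N k a + (k : ZMod (N * k)) := by
  haveI : NeZero N := ⟨by omega⟩
  haveI : Fact (1 < N) := ⟨by omega⟩
  rw [rho, ZMod.val_add, ZMod.val_one, cast_k_mul_mod, rho]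
  push_cast
  ring

lemma keyE (hN : 3 ≤ N) (hk : 1 ≤ k) {a b : ZMod N} {i j : ℕ} (hi : i < k) (hj : j < k) :
    rho N k a + (i : ZMod (N * k)) = rho N k b + (j : ZMod (N * k)) ↔ a = b ∧ i = j := by
  haveI : NeZero N := ⟨by omega⟩
  haveI : NeZero (N * k) := ⟨Nat.mul_ne_zero (by omega) (by omega)⟩
  constructor
  · intro h
    have hva := ZMod.val_lt a
    have hvb := ZMod.val_lt b
    have ha : k * a.val + i < N * k := by nlinarith
    have hb : k * b.val + j < N * k := by nlinarith
    have h' : ((k * a.val + i : ℕ) : ZMod (N * k)) = ((k * b.val + j : ℕ) : ZMod (N * k)) := by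
      push_cast
      rw [rho, rho] at h
      push_cast at h
      linear_combination h
    have hnat : k * a.val + i = k * b.val + j := by
      have := congrArg ZMod.val h'
      rwa [ZMod.val_cast_of_lt ha, ZMod.val_cast_of_lt hb] at this
    have hnat' : i + a.val * k = j + b.val * k := by
      rw [mul_comm k a.val, mul_comm k b.val] at hnat
      linarith
    have hij : i = j := by
      have := congrArg (· % k) hnat'
      simpa [Nat.add_mul_mod_self_right, Nat.mod_eq_of_lt hi, Nat.mod_eq_of_lt hj] using this
    refine ⟨?_, hij⟩
    apply ZMod.val_injective
    have : a.val * k = b.val * k := by omega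
    exact Nat.eq_of_mul_eq_mul_right (by omega) this
  · rintro ⟨rfl, rfl⟩
    rfl

lemma keyE0 (hN : 3 ≤ N) (hk : 1 ≤ k) {a b : ZMod N} {j : ℕ} (hj : j < k) :
    rho N k b + (j : ZMod (N * k)) = rho N k a ↔ b = a ∧ j = 0 := by
  have : rho N k a = rho N k a + ((0 : ℕ) : ZMod (N * k)) := by simp
  rw [this, keyE hN hk hj (by omega)]

lemma keyA (hN : 3 ≤ N) (hk : 1 ≤ k) {a b : ZMod N} {i j : ℕ} (hik : i + 1 < k) (hj : j < k) :
    rho N k a + (i : ZMod (N * k)) + 1 = rho N k b + (j : ZMod (N * k)) ↔ a = b ∧ i + 1 = j := by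
  have : rho N k a + (i : ZMod (N * k)) + 1 = rho N k a + ((i + 1 : ℕ) : ZMod (N * k)) := by
    push_cast; ring
  rw [this, keyE hN hk hik hj]

lemma keyB (hN : 3 ≤ N) (hk : 1 ≤ k) {a b : ZMod N} {i j : ℕ} (hik : i + 1 = k) (hj : j < k) :
    rho N k a + (i : ZMod (N * k)) + 1 = rho N k b + (j : ZMod (N * k)) ↔ a + 1 = b ∧ 0 = j := by
  have h1 : rho N k a + (i : ZMod (N * k)) + 1 = rho N k (a + 1) + ((0 : ℕ) : ZMod (N * k)) := by
    rw [rho_add_one hN hk]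
    push_cast [← hik]
    ring
  rw [h1, keyE hN hk (by omega) hj]

lemma zmod_one_ne_zero (hN : 3 ≤ N) : (1 : ZMod N) ≠ 0 := by
  haveI : NeZero N := ⟨by omega⟩
  intro h
  have h' : ((1 : ℕ) : ZMod N) = 0 := by exact_mod_cast h
  rw [ZMod.natCast_eq_zero_iff] at h'
  have := Nat.le_of_dvd one_pos h'
  omega

lemma zmod_two_ne_zero (hN : 3 ≤ N) : (2 : ZMod N) ≠ 0 := by
  haveI : NeZero N := ⟨by omega⟩
  intro h
  have h' : ((2 : ℕ) : ZMod N) = 0 := by exact_mod_cast h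
  rw [ZMod.natCast_eq_zero_iff] at h'
  have := Nat.le_of_dvd two_pos h'
  omega

lemma zne1 (hN : 3 ≤ N) (a b : ZMod N) (h : a = b + 1) (h' : a = b) : False := by
  apply zmod_one_ne_zero hN
  linear_combination h' - h

lemma zne2 (hN : 3 ≤ N) (a b : ZMod N) (h : a = b + 2) (h' : a = b) : False := by
  apply zmod_two_ne_zero hN
  linear_combination h' - h

end Arith


/-! ### One-dimensional commutation lemmas -/

section OneD

variable {N k : ℕ}

lemma keyB0 (hN : 3 ≤ N) (hk : 1 ≤ k) {a b : ZMod N} {i : ℕ} (hik : i + 1 = k) :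
    rho N k a + (i : ZMod (N * k)) + 1 = rho N k b ↔ a + 1 = b := by
  constructor
  · intro h
    exact ((keyB hN hk hik (show 0 < k by omega)).mp (by simpa using h)).1
  · intro h
    have := (keyB hN hk hik (show 0 < k by omega)).mpr ⟨h, rfl⟩
    simpa using this

lemma rho_eq_iff (hN : 3 ≤ N) (hk : 1 ≤ k) (a b : ZMod N) :
    rho N k b = rho N k a ↔ b = a := by
  constructor
  · intro h
    have h' : rho N k b + ((0 : ℕ) : ZMod (N * k)) = rho N k a := by simpa using h
    exact ((keyE0 hN hk (by omega)).mp h').1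
  · rintro rfl; rfl

lemma add_one_ne (hN : 3 ≤ N) (a : ZMod N) : a + 1 ≠ a :=
  fun h => zmod_one_ne_zero hN (by linear_combination h)

lemma sub_one_ne (hN : 3 ≤ N) (a : ZMod N) : a - 1 ≠ a :=
  fun h => zmod_one_ne_zero hN (by linear_combination -h)

lemma add_two_ne (hN : 3 ≤ N) (a : ZMod N) : a + 1 + 1 ≠ a :=
  fun h => zmod_two_ne_zero hN (by linear_combination h)

lemma add_ne_sub (hN : 3 ≤ N) (a : ZMod N) : a + 1 ≠ a - 1 :=
  fun h => zmod_two_ne_zero hN (by linear_combination h)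

lemma muL_sum_left {M : ℕ} {α : Type*} (s : Finset α) (f : α → EC M) (y : EC M) :
    muL M (∑ i ∈ s, f i) y = ∑ i ∈ s, muL M (f i) y := by
  rw [map_sum, LinearMap.coe_sum, Finset.sum_apply]

lemma muL_sum_right {M : ℕ} {α : Type*} (x : EC M) (s : Finset α) (f : α → EC M) :
    muL M x (∑ i ∈ s, f i) = ∑ i ∈ s, muL M x (f i) := map_sum _ _ _

/-- `(k-1)+1 = k` as a cast identity. -/
lemma cast_pred_add_one (hk : 1 ≤ k) {M : ℕ} :
    ((k - 1 : ℕ) : ZMod M) + 1 = ((k : ℕ) : ZMod M) := by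
  rw [show (1 : ZMod M) = ((1 : ℕ) : ZMod M) by push_cast; ring, ← Nat.cast_add,
    Nat.sub_add_cancel hk]

lemma rho_top (hN : 3 ≤ N) (hk : 1 ≤ k) (a : ZMod N) :
    rho N k a + ((k - 1 : ℕ) : ZMod (N * k)) + 1 = rho N k (a + 1) := by
  rw [add_assoc, cast_pred_add_one hk, rho_add_one hN hk]

/-! #### The `P`-`S` case -/

lemma condPS (hN : 3 ≤ N) (hk : 1 ≤ k) (a b : ZMod N) {j : ℕ} (hj : j < k) :
    (rho N k b + (j : ZMod (N * k)) = rho N k a ∨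
     rho N k b + (j : ZMod (N * k)) = rho N k a - 1)
      ↔ ((b = a ∧ j = 0) ∨ (b = a - 1 ∧ j = k - 1)) := by
  rw [keyE0 hN hk hj, eq_sub_iff_add_eq]
  apply or_congr Iff.rfl
  rcases eq_or_lt_of_le (show j + 1 ≤ k by omega) with hjk | hjk
  · rw [keyB0 hN hk hjk]
    constructor
    · intro h
      exact ⟨eq_sub_iff_add_eq.mpr h, by omega⟩
    · rintro ⟨h, -⟩
      exact eq_sub_iff_add_eq.mp h
  · constructor
    · intro h
      rcases (keyA hN hk hjk (show 0 < k by omega)).mp (by simpa using h) with ⟨-, hj1⟩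
      omega
    · rintro ⟨-, hj1⟩
      omega

lemma ptPS (hN : 3 ≤ N) (hk : 1 ≤ k) (a b : ZMod N) {j : ℕ} (hj : j < k) :
    muL (N * k) (Finsupp.single (B.P (rho N k a)) (1 : ℚ))
        (Finsupp.single (B.S (rho N k b + (j : ZMod (N * k)))) (1 : ℚ))
      = if (b = a ∧ j = 0) ∨ (b = a - 1 ∧ j = k - 1) then
          Finsupp.single (B.P (rho N k a)) (1/2 : ℚ) else 0 := by
  rw [muL_single_single, one_mul, one_smul]
  simp only [B.muB]
  exact if_congr (condPS hN hk a b hj) rfl rfl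

lemma ptSP (hN : 3 ≤ N) (hk : 1 ≤ k) (a b : ZMod N) {j : ℕ} (hj : j < k) :
    muL (N * k) (Finsupp.single (B.S (rho N k b + (j : ZMod (N * k)))) (1 : ℚ))
        (Finsupp.single (B.P (rho N k a)) (1 : ℚ))
      = if (b = a ∧ j = 0) ∨ (b = a - 1 ∧ j = k - 1) then
          Finsupp.single (B.P (rho N k a)) (1/2 : ℚ) else 0 := by
  rw [muL_single_single, one_mul, one_smul]
  simp only [B.muB]
  exact if_congr (condPS hN hk a b hj) rfl rfl

lemma sumPS (hN : 3 ≤ N) (hk : 1 ≤ k) (a b : ZMod N) (C : EC (N * k)) :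
    ∑ j ∈ Finset.range k,
        (if (b = a ∧ j = 0) ∨ (b = a - 1 ∧ j = k - 1) then C else 0)
      = if b = a ∨ b = a - 1 then C else 0 := by
  by_cases h1 : b = a
  · subst h1
    have h2 : ¬ b = b - 1 := fun h => sub_one_ne hN b h.symm
    rw [Finset.sum_congr rfl (fun j _ => if_congr
      (show ((b = b ∧ j = 0) ∨ (b = b - 1 ∧ j = k - 1)) ↔ j = 0 by
        constructor
        · rintro (⟨-, h⟩ | ⟨h, -⟩)
          · exact h
          · exact absurd h h2
        · intro h
          exact Or.inl ⟨rfl, h⟩) rfl rfl)]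
    rw [Finset.sum_ite_eq' (Finset.range k) 0 (fun _ => C),
      if_pos (Finset.mem_range.mpr (by omega)), if_pos (Or.inl rfl)]
  · by_cases h2 : b = a - 1
    · rw [Finset.sum_congr rfl (fun j _ => if_congr
        (show ((b = a ∧ j = 0) ∨ (b = a - 1 ∧ j = k - 1)) ↔ j = k - 1 by
          constructor
          · rintro (⟨h, -⟩ | ⟨-, h⟩)
            · exact absurd h h1
            · exact h
          · intro h
            exact Or.inr ⟨h2, h⟩) rfl rfl)]
      rw [Finset.sum_ite_eq' (Finset.range k) (k - 1) (fun _ => C),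
        if_pos (Finset.mem_range.mpr (by omega)), if_pos (Or.inr h2)]
    · rw [Finset.sum_congr rfl (fun j _ => if_neg (by tauto)), if_neg (by tauto)]
      simp

lemma muPS (hN : 3 ≤ N) (hk : 1 ≤ k) (a b : ZMod N) :
    iotaL N k (B.muB (B.P a) (B.S b)) = muL (N * k) (iotaB N k (B.P a)) (iotaB N k (B.S b)) := by
  simp only [iotaB]
  rw [muL_sum_right]
  rw [Finset.sum_congr rfl (fun j hj => ptPS hN hk a b (Finset.mem_range.mp hj))]
  rw [sumPS hN hk a b]
  show iotaL N k (if b = a ∨ b = a - 1 then Finsupp.single (B.P a) (1/2 : ℚ) else 0) = _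
  by_cases h : b = a ∨ b = a - 1
  · rw [if_pos h, if_pos h, iotaL_single, iotaB, Finsupp.smul_single', mul_one]
  · rw [if_neg h, if_neg h, map_zero]

lemma muSP (hN : 3 ≤ N) (hk : 1 ≤ k) (a b : ZMod N) :
    iotaL N k (B.muB (B.S b) (B.P a)) = muL (N * k) (iotaB N k (B.S b)) (iotaB N k (B.P a)) := by
  simp only [iotaB]
  rw [muL_sum_left]
  rw [Finset.sum_congr rfl (fun j hj => ptSP hN hk a b (Finset.mem_range.mp hj))]
  rw [sumPS hN hk a b]
  show iotaL N k (if b = a ∨ b = a - 1 then Finsupp.single (B.P a) (1/2 : ℚ) else 0) = _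
  by_cases h : b = a ∨ b = a - 1
  · rw [if_pos h, if_pos h, iotaL_single, iotaB, Finsupp.smul_single', mul_one]
  · rw [if_neg h, if_neg h, map_zero]

/-! #### The `P`-`I`, `I`-`I`, `P`-`P` cases -/

lemma muPI (hN : 3 ≤ N) (hk : 1 ≤ k) (a b : ZMod N) :
    iotaL N k (B.muB (B.P a) (B.I b)) = muL (N * k) (iotaB N k (B.P a)) (iotaB N k (B.I b)) := by
  simp only [iotaB]
  rw [muL_single_single, one_mul, one_smul]
  show iotaL N k (if b = a then Finsupp.single (B.P a) (1/4 : ℚ) else 0)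
    = (if rho N k b = rho N k a then Finsupp.single (B.P (rho N k a)) (1/4 : ℚ) else 0)
  by_cases h : b = a
  · rw [if_pos h, if_pos ((rho_eq_iff hN hk a b).mpr h), iotaL_single, iotaB,
      Finsupp.smul_single', mul_one]
  · rw [if_neg h, if_neg (fun hh => h ((rho_eq_iff hN hk a b).mp hh)), map_zero]

lemma muIP (hN : 3 ≤ N) (hk : 1 ≤ k) (a b : ZMod N) :
    iotaL N k (B.muB (B.I b) (B.P a)) = muL (N * k) (iotaB N k (B.I b)) (iotaB N k (B.P a)) := by
  simp only [iotaB]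
  rw [muL_single_single, one_mul, one_smul]
  show iotaL N k (if b = a then Finsupp.single (B.P a) (1/4 : ℚ) else 0)
    = (if rho N k b = rho N k a then Finsupp.single (B.P (rho N k a)) (1/4 : ℚ) else 0)
  by_cases h : b = a
  · rw [if_pos h, if_pos ((rho_eq_iff hN hk a b).mpr h), iotaL_single, iotaB,
      Finsupp.smul_single', mul_one]
  · rw [if_neg h, if_neg (fun hh => h ((rho_eq_iff hN hk a b).mp hh)), map_zero]

lemma muII (hN : 3 ≤ N) (hk : 1 ≤ k) (a b : ZMod N) :
    iotaL N k (B.muB (B.I a) (B.I b)) = muL (N * k) (iotaB N k (B.I a)) (iotaB N k (B.I b)) := by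
  simp only [iotaB]
  rw [muL_single_single, one_mul, one_smul]
  show iotaL N k (if b = a then Finsupp.single (B.I a) (1/4 : ℚ) else 0)
    = (if rho N k b = rho N k a then Finsupp.single (B.I (rho N k a)) (1/4 : ℚ) else 0)
  by_cases h : b = a
  · rw [if_pos h, if_pos ((rho_eq_iff hN hk a b).mpr h), iotaL_single, iotaB,
      Finsupp.smul_single', mul_one]
  · rw [if_neg h, if_neg (fun hh => h ((rho_eq_iff hN hk a b).mp hh)), map_zero]

lemma muPP (hN : 3 ≤ N) (hk : 1 ≤ k) (a b : ZMod N) :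
    iotaL N k (B.muB (B.P a) (B.P b)) = muL (N * k) (iotaB N k (B.P a)) (iotaB N k (B.P b)) := by
  simp only [iotaB]
  rw [muL_single_single, one_mul, one_smul]
  show iotaL N k 0 = B.muB (B.P (rho N k a)) (B.P (rho N k b))
  simp only [B.muB, map_zero]

/-! #### The `S`-`I` cases -/

lemma condSI (hN : 3 ≤ N) (hk : 1 ≤ k) (a b : ZMod N) {i : ℕ} (hi : i < k) :
    (rho N k b = rho N k a + (i : ZMod (N * k)) ∨
     rho N k b = rho N k a + (i : ZMod (N * k)) + 1)
      ↔ ((b = a ∧ i = 0) ∨ (b = a + 1 ∧ i = k - 1)) := by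
  apply or_congr
  · rw [eq_comm, keyE0 hN hk hi]
    exact and_congr eq_comm Iff.rfl
  · rw [eq_comm]
    rcases eq_or_lt_of_le (show i + 1 ≤ k by omega) with hik | hik
    · rw [keyB0 hN hk hik]
      constructor
      · intro h
        exact ⟨h.symm, by omega⟩
      · rintro ⟨rfl, -⟩
        rfl
    · constructor
      · intro h
        rcases (keyA hN hk hik (show 0 < k by omega)).mp (by simpa using h) with ⟨-, h1⟩
        omega
      · rintro ⟨-, h1⟩
        omega

lemma ptSI (hN : 3 ≤ N) (hk : 1 ≤ k) (a b : ZMod N) {i : ℕ} (hi : i < k) :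
    muL (N * k) (Finsupp.single (B.S (rho N k a + (i : ZMod (N * k)))) (1 : ℚ))
        (Finsupp.single (B.I (rho N k b)) (1 : ℚ))
      = if (b = a ∧ i = 0) ∨ (b = a + 1 ∧ i = k - 1) then
          Finsupp.single (B.I (rho N k b)) (1/2 : ℚ) else 0 := by
  rw [muL_single_single, one_mul, one_smul]
  simp only [B.muB]
  exact if_congr (condSI hN hk a b hi) rfl rfl

lemma ptIS (hN : 3 ≤ N) (hk : 1 ≤ k) (a b : ZMod N) {i : ℕ} (hi : i < k) :
    muL (N * k) (Finsupp.single (B.I (rho N k b)) (1 : ℚ))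
        (Finsupp.single (B.S (rho N k a + (i : ZMod (N * k)))) (1 : ℚ))
      = if (b = a ∧ i = 0) ∨ (b = a + 1 ∧ i = k - 1) then
          Finsupp.single (B.I (rho N k b)) (1/2 : ℚ) else 0 := by
  rw [muL_single_single, one_mul, one_smul]
  simp only [B.muB]
  exact if_congr (condSI hN hk a b hi) rfl rfl

lemma sumSI (hN : 3 ≤ N) (hk : 1 ≤ k) (a b : ZMod N) (C : EC (N * k)) :
    ∑ i ∈ Finset.range k,
        (if (b = a ∧ i = 0) ∨ (b = a + 1 ∧ i = k - 1) then C else 0)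
      = if b = a ∨ b = a + 1 then C else 0 := by
  by_cases h1 : b = a
  · subst h1
    have h2 : ¬ b = b + 1 := fun h => add_one_ne hN b h.symm
    rw [Finset.sum_congr rfl (fun j _ => if_congr
      (show ((b = b ∧ j = 0) ∨ (b = b + 1 ∧ j = k - 1)) ↔ j = 0 by
        constructor
        · rintro (⟨-, h⟩ | ⟨h, -⟩)
          · exact h
          · exact absurd h h2
        · intro h
          exact Or.inl ⟨rfl, h⟩) rfl rfl)]
    rw [Finset.sum_ite_eq' (Finset.range k) 0 (fun _ => C),
      if_pos (Finset.mem_range.mpr (by omega)), if_pos (Or.inl rfl)]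
  · by_cases h2 : b = a + 1
    · rw [Finset.sum_congr rfl (fun j _ => if_congr
        (show ((b = a ∧ j = 0) ∨ (b = a + 1 ∧ j = k - 1)) ↔ j = k - 1 by
          constructor
          · rintro (⟨h, -⟩ | ⟨-, h⟩)
            · exact absurd h h1
            · exact h
          · intro h
            exact Or.inr ⟨h2, h⟩) rfl rfl)]
      rw [Finset.sum_ite_eq' (Finset.range k) (k - 1) (fun _ => C),
        if_pos (Finset.mem_range.mpr (by omega)), if_pos (Or.inr h2)]
    · rw [Finset.sum_congr rfl (fun j _ => if_neg (by tauto)), if_neg (by tauto)]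
      simp

lemma muSI (hN : 3 ≤ N) (hk : 1 ≤ k) (a b : ZMod N) :
    iotaL N k (B.muB (B.S a) (B.I b)) = muL (N * k) (iotaB N k (B.S a)) (iotaB N k (B.I b)) := by
  simp only [iotaB]
  rw [muL_sum_left]
  rw [Finset.sum_congr rfl (fun i hi => ptSI hN hk a b (Finset.mem_range.mp hi))]
  rw [sumSI hN hk a b]
  show iotaL N k (if b = a ∨ b = a + 1 then Finsupp.single (B.I b) (1/2 : ℚ) else 0) = _
  by_cases h : b = a ∨ b = a + 1
  · rw [if_pos h, if_pos h, iotaL_single, iotaB, Finsupp.smul_single', mul_one]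
  · rw [if_neg h, if_neg h, map_zero]

lemma muIS (hN : 3 ≤ N) (hk : 1 ≤ k) (a b : ZMod N) :
    iotaL N k (B.muB (B.I b) (B.S a)) = muL (N * k) (iotaB N k (B.I b)) (iotaB N k (B.S a)) := by
  simp only [iotaB]
  rw [muL_sum_right]
  rw [Finset.sum_congr rfl (fun i hi => ptIS hN hk a b (Finset.mem_range.mp hi))]
  rw [sumSI hN hk a b]
  show iotaL N k (if b = a ∨ b = a + 1 then Finsupp.single (B.I b) (1/2 : ℚ) else 0) = _
  by_cases h : b = a ∨ b = a + 1
  · rw [if_pos h, if_pos h, iotaL_single, iotaB, Finsupp.smul_single', mul_one]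
  · rw [if_neg h, if_neg h, map_zero]

end OneD

/-! #### The `S`-`S` cases -/

section SSCase

variable {N k : ℕ}

lemma rho_zero (a : ZMod N) : rho N k a + ((0 : ℕ) : ZMod (N * k)) = rho N k a := by simp

lemma ptSS_diag (hN : 3 ≤ N) (hk : 1 ≤ k) (a : ZMod N) {i j : ℕ} (hi : i < k) (hj : j < k) :
    muL (N * k) (Finsupp.single (B.S (rho N k a + (i : ZMod (N * k)))) (1 : ℚ))
        (Finsupp.single (B.S (rho N k a + (j : ZMod (N * k)))) (1 : ℚ))
      = (if j = i then
            Finsupp.single (B.I (rho N k a + (i : ZMod (N * k)))) (-1 : ℚ)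
              + Finsupp.single (B.S (rho N k a + (i : ZMod (N * k)))) 1
              + Finsupp.single (B.I (rho N k a + (i : ZMod (N * k)) + 1)) (-1 : ℚ)
          else 0)
        + (if j = i + 1 then
            Finsupp.single (B.I (rho N k a + (i : ZMod (N * k)) + 1)) (1 : ℚ) else 0)
        + (if i = j + 1 then
            Finsupp.single (B.I (rho N k a + (i : ZMod (N * k)))) (1 : ℚ) else 0) := by
  rw [muL_single_single, one_mul, one_smul]
  have h0 : (rho N k a + (j : ZMod (N * k)) = rho N k a + (i : ZMod (N * k))) ↔ j = i := by
    rw [keyE hN hk hj hi]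
    simp
  have h1 : (rho N k a + (j : ZMod (N * k)) = rho N k a + (i : ZMod (N * k)) + 1) ↔ j = i + 1 := by
    rcases eq_or_lt_of_le (show i + 1 ≤ k by omega) with hik | hik
    · rw [eq_comm, keyB hN hk hik hj]
      constructor
      · rintro ⟨h, -⟩
        exact absurd h (add_one_ne hN a)
      · intro h
        omega
    · rw [eq_comm, keyA hN hk hik hj]
      constructor
      · rintro ⟨-, h⟩
        omega
      · intro h
        exact ⟨rfl, by omega⟩
  have h2 : (rho N k a + (j : ZMod (N * k)) = rho N k a + (i : ZMod (N * k)) - 1) ↔ i = j + 1 := by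
    rw [eq_sub_iff_add_eq]
    rcases eq_or_lt_of_le (show j + 1 ≤ k by omega) with hjk | hjk
    · rw [keyB hN hk hjk hi]
      constructor
      · rintro ⟨h, -⟩
        exact absurd h (add_one_ne hN a)
      · intro h
        omega
    · rw [keyA hN hk hjk hi]
      constructor
      · rintro ⟨-, h⟩
        omega
      · intro h
        exact ⟨rfl, by omega⟩
  simp only [B.muB]
  by_cases e0 : j = i
  · subst e0
    rw [if_pos (h0.mpr rfl), if_pos rfl, if_neg (show ¬ j = j + 1 by omega),
      if_neg (show ¬ j = j + 1 by omega), add_zero, add_zero]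
  · by_cases e1 : j = i + 1
    · rw [if_neg (fun hh => e0 (h0.mp hh)), if_pos (h1.mpr e1), if_neg e0, if_pos e1,
        if_neg (show ¬ i = j + 1 by omega), zero_add, add_zero]
    · by_cases e2 : i = j + 1
      · rw [if_neg (fun hh => e0 (h0.mp hh)), if_neg (fun hh => e1 (h1.mp hh)),
          if_pos (h2.mpr e2), if_neg e0, if_neg e1, if_pos e2, zero_add, zero_add]
      · rw [if_neg (fun hh => e0 (h0.mp hh)), if_neg (fun hh => e1 (h1.mp hh)),
          if_neg (fun hh => e2 (h2.mp hh)), if_neg e0, if_neg e1, if_neg e2, add_zero, add_zero]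

lemma sum_diag_inner (hN : 3 ≤ N) (hk : 1 ≤ k) (a : ZMod N) {i : ℕ} (hi : i < k) :
    ∑ j ∈ Finset.range k,
        muL (N * k) (Finsupp.single (B.S (rho N k a + (i : ZMod (N * k)))) (1 : ℚ))
          (Finsupp.single (B.S (rho N k a + (j : ZMod (N * k)))) (1 : ℚ))
      = Finsupp.single (B.S (rho N k a + (i : ZMod (N * k)))) (1 : ℚ)
        - (if i = 0 then Finsupp.single (B.I (rho N k a)) (1 : ℚ) else 0)
        - (if i = k - 1 then Finsupp.single (B.I (rho N k (a + 1))) (1 : ℚ) else 0) := by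
  rw [Finset.sum_congr rfl (fun j hj => ptSS_diag hN hk a hi (Finset.mem_range.mp hj))]
  rw [Finset.sum_add_distrib, Finset.sum_add_distrib]
  rw [Finset.sum_ite_eq' (Finset.range k) i, if_pos (Finset.mem_range.mpr hi)]
  rw [Finset.sum_ite_eq' (Finset.range k) (i + 1)]
  have h3 : (∑ j ∈ Finset.range k,
      if i = j + 1 then Finsupp.single (B.I (rho N k a + (i : ZMod (N * k)))) (1 : ℚ) else 0)
      = if i = 0 then 0 else Finsupp.single (B.I (rho N k a + (i : ZMod (N * k)))) (1 : ℚ) := by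
    rcases i with _ | m
    · simp
    · rw [Finset.sum_congr rfl (fun j _ =>
        if_congr (show (m + 1 = j + 1) ↔ (j = m) by omega) rfl rfl)]
      rw [Finset.sum_ite_eq' (Finset.range k) m, if_pos (Finset.mem_range.mpr (by omega)),
        if_neg (Nat.succ_ne_zero m)]
  rw [h3]
  have e1 : (if i + 1 ∈ Finset.range k then
        Finsupp.single (B.I (rho N k a + (i : ZMod (N * k)) + 1)) (1 : ℚ) else 0)
      = Finsupp.single (B.I (rho N k a + (i : ZMod (N * k)) + 1)) (1 : ℚ)
        - (if i = k - 1 then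
            Finsupp.single (B.I (rho N k a + (i : ZMod (N * k)) + 1)) (1 : ℚ) else 0) := by
    by_cases h : i = k - 1
    · rw [if_neg (by rw [Finset.mem_range]; omega), if_pos h, sub_self]
    · rw [if_pos (by rw [Finset.mem_range]; omega), if_neg h, sub_zero]
  have e2 : (if i = 0 then (0 : EC (N * k)) else
        Finsupp.single (B.I (rho N k a + (i : ZMod (N * k)))) (1 : ℚ))
      = Finsupp.single (B.I (rho N k a + (i : ZMod (N * k)))) (1 : ℚ)
        - (if i = 0 then Finsupp.single (B.I (rho N k a + (i : ZMod (N * k)))) (1 : ℚ) else 0) := by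
    by_cases h : i = 0
    · rw [if_pos h, if_pos h, sub_self]
    · rw [if_neg h, if_neg h, sub_zero]
  have e3 : (if i = k - 1 then
        Finsupp.single (B.I (rho N k a + (i : ZMod (N * k)) + 1)) (1 : ℚ) else 0)
      = (if i = k - 1 then Finsupp.single (B.I (rho N k (a + 1))) (1 : ℚ) else 0) := by
    by_cases h : i = k - 1
    · rw [if_pos h, if_pos h, h, rho_top hN hk]
    · rw [if_neg h, if_neg h]
  have e4 : (if i = 0 then
        Finsupp.single (B.I (rho N k a + (i : ZMod (N * k)))) (1 : ℚ) else 0)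
      = (if i = 0 then Finsupp.single (B.I (rho N k a)) (1 : ℚ) else 0) := by
    by_cases h : i = 0
    · rw [if_pos h, if_pos h, h, rho_zero]
    · rw [if_neg h, if_neg h]
  rw [e1, e2, e3, e4]
  simp only [Finsupp.single_neg]
  abel

lemma muSS_diag (hN : 3 ≤ N) (hk : 1 ≤ k) (a : ZMod N) :
    iotaL N k (B.muB (B.S a) (B.S a)) = muL (N * k) (iotaB N k (B.S a)) (iotaB N k (B.S a)) := by
  simp only [iotaB]
  rw [muL_sum_left]
  rw [Finset.sum_congr rfl (fun i _ => muL_sum_right _ _ _)]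
  rw [Finset.sum_congr rfl (fun i hi => sum_diag_inner hN hk a (Finset.mem_range.mp hi))]
  rw [Finset.sum_sub_distrib, Finset.sum_sub_distrib]
  rw [Finset.sum_ite_eq' (Finset.range k) 0, if_pos (Finset.mem_range.mpr (by omega))]
  rw [Finset.sum_ite_eq' (Finset.range k) (k - 1), if_pos (Finset.mem_range.mpr (by omega))]
  show iotaL N k (if a = a then _ else _) = _
  rw [if_pos rfl, map_add, map_add, iotaL_single, iotaL_single, iotaL_single]
  simp only [iotaB, Finsupp.smul_single', mul_one, neg_smul, one_smul, Finsupp.single_neg]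
  abel

lemma ptSS_succ (hN : 3 ≤ N) (hk : 1 ≤ k) (a : ZMod N) {i j : ℕ} (hi : i < k) (hj : j < k) :
    muL (N * k) (Finsupp.single (B.S (rho N k a + (i : ZMod (N * k)))) (1 : ℚ))
        (Finsupp.single (B.S (rho N k (a + 1) + (j : ZMod (N * k)))) (1 : ℚ))
      = if i = k - 1 ∧ j = 0 then Finsupp.single (B.I (rho N k (a + 1))) (1 : ℚ) else 0 := by
  rw [muL_single_single, one_mul, one_smul]
  have h0 : ¬ (rho N k (a + 1) + (j : ZMod (N * k)) = rho N k a + (i : ZMod (N * k))) :=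
    fun h => add_one_ne hN a ((keyE hN hk hj hi).mp h).1
  have h1 : (rho N k (a + 1) + (j : ZMod (N * k)) = rho N k a + (i : ZMod (N * k)) + 1)
      ↔ (i = k - 1 ∧ j = 0) := by
    rcases eq_or_lt_of_le (show i + 1 ≤ k by omega) with hik | hik
    · rw [eq_comm, keyB hN hk hik hj]
      constructor
      · rintro ⟨-, h⟩
        exact ⟨by omega, by omega⟩
      · rintro ⟨-, h⟩
        exact ⟨rfl, by omega⟩
    · rw [eq_comm, keyA hN hk hik hj]
      constructor
      · rintro ⟨h, -⟩
        exact absurd h.symm (add_one_ne hN a)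
      · rintro ⟨h, -⟩
        omega
  have h2 : ¬ (rho N k (a + 1) + (j : ZMod (N * k)) = rho N k a + (i : ZMod (N * k)) - 1) := by
    rw [eq_sub_iff_add_eq]
    rcases eq_or_lt_of_le (show j + 1 ≤ k by omega) with hjk | hjk
    · rw [keyB hN hk hjk hi]
      rintro ⟨h, -⟩
      exact add_two_ne hN a h
    · rw [keyA hN hk hjk hi]
      rintro ⟨h, -⟩
      exact add_one_ne hN a h
  simp only [B.muB]
  by_cases hc : i = k - 1 ∧ j = 0
  · rw [if_neg h0, if_pos (h1.mpr hc), if_pos hc, hc.1, rho_top hN hk]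
  · rw [if_neg h0, if_neg (fun hh => hc (h1.mp hh)), if_neg h2, if_neg hc]

lemma muSS_succ (hN : 3 ≤ N) (hk : 1 ≤ k) (a : ZMod N) :
    iotaL N k (B.muB (B.S a) (B.S (a + 1)))
      = muL (N * k) (iotaB N k (B.S a)) (iotaB N k (B.S (a + 1))) := by
  simp only [iotaB]
  rw [muL_sum_left]
  rw [Finset.sum_congr rfl (fun i _ => muL_sum_right _ _ _)]
  rw [Finset.sum_congr rfl (fun i hi => Finset.sum_congr rfl
    (fun j hj => ptSS_succ hN hk a (Finset.mem_range.mp hi) (Finset.mem_range.mp hj)))]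
  have hin : ∀ i : ℕ, (∑ j ∈ Finset.range k,
      if i = k - 1 ∧ j = 0 then Finsupp.single (B.I (rho N k (a + 1))) (1 : ℚ) else 0)
      = if i = k - 1 then Finsupp.single (B.I (rho N k (a + 1))) (1 : ℚ) else 0 := by
    intro i
    by_cases h : i = k - 1
    · rw [Finset.sum_congr rfl (fun j _ => if_congr
        (show (i = k - 1 ∧ j = 0) ↔ j = 0 by simp [h]) rfl rfl),
        Finset.sum_ite_eq' (Finset.range k) 0, if_pos (Finset.mem_range.mpr (by omega)),
        if_pos h]
    · rw [Finset.sum_congr rfl (fun j _ => if_neg (by tauto)), if_neg h]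
      simp
  rw [Finset.sum_congr rfl (fun i _ => hin i)]
  rw [Finset.sum_ite_eq' (Finset.range k) (k - 1), if_pos (Finset.mem_range.mpr (by omega))]
  show iotaL N k (if a + 1 = a then _ else if a + 1 = a + 1 then _ else _) = _
  rw [if_neg (add_one_ne hN a), if_pos rfl, iotaL_single, one_smul, iotaB]

lemma ptSS_pred (hN : 3 ≤ N) (hk : 1 ≤ k) (a : ZMod N) {i j : ℕ} (hi : i < k) (hj : j < k) :
    muL (N * k) (Finsupp.single (B.S (rho N k a + (i : ZMod (N * k)))) (1 : ℚ))
        (Finsupp.single (B.S (rho N k (a - 1) + (j : ZMod (N * k)))) (1 : ℚ))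
      = if i = 0 ∧ j = k - 1 then Finsupp.single (B.I (rho N k a)) (1 : ℚ) else 0 := by
  rw [muL_single_single, one_mul, one_smul]
  have h0 : ¬ (rho N k (a - 1) + (j : ZMod (N * k)) = rho N k a + (i : ZMod (N * k))) :=
    fun h => sub_one_ne hN a ((keyE hN hk hj hi).mp h).1
  have h1 : ¬ (rho N k (a - 1) + (j : ZMod (N * k)) = rho N k a + (i : ZMod (N * k)) + 1) := by
    rcases eq_or_lt_of_le (show i + 1 ≤ k by omega) with hik | hik
    · rw [eq_comm, keyB hN hk hik hj]
      rintro ⟨h, -⟩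
      exact add_ne_sub hN a h
    · rw [eq_comm, keyA hN hk hik hj]
      rintro ⟨h, -⟩
      exact sub_one_ne hN a h.symm
  have h2 : (rho N k (a - 1) + (j : ZMod (N * k)) = rho N k a + (i : ZMod (N * k)) - 1)
      ↔ (i = 0 ∧ j = k - 1) := by
    rw [eq_sub_iff_add_eq]
    rcases eq_or_lt_of_le (show j + 1 ≤ k by omega) with hjk | hjk
    · rw [keyB hN hk hjk hi]
      constructor
      · rintro ⟨-, h⟩
        exact ⟨by omega, by omega⟩
      · rintro ⟨h, -⟩
        exact ⟨by rw [sub_add_cancel], by omega⟩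
    · rw [keyA hN hk hjk hi]
      constructor
      · rintro ⟨h, -⟩
        exact absurd h (sub_one_ne hN a)
      · rintro ⟨-, h⟩
        omega
  simp only [B.muB]
  by_cases hc : i = 0 ∧ j = k - 1
  · rw [if_neg h0, if_neg h1, if_pos (h2.mpr hc), if_pos hc, hc.1, rho_zero]
  · rw [if_neg h0, if_neg h1, if_neg (fun hh => hc (h2.mp hh)), if_neg hc]

lemma muSS_pred (hN : 3 ≤ N) (hk : 1 ≤ k) (a : ZMod N) :
    iotaL N k (B.muB (B.S a) (B.S (a - 1)))
      = muL (N * k) (iotaB N k (B.S a)) (iotaB N k (B.S (a - 1))) := by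
  simp only [iotaB]
  rw [muL_sum_left]
  rw [Finset.sum_congr rfl (fun i _ => muL_sum_right _ _ _)]
  rw [Finset.sum_congr rfl (fun i hi => Finset.sum_congr rfl
    (fun j hj => ptSS_pred hN hk a (Finset.mem_range.mp hi) (Finset.mem_range.mp hj)))]
  have hin : ∀ i : ℕ, (∑ j ∈ Finset.range k,
      if i = 0 ∧ j = k - 1 then Finsupp.single (B.I (rho N k a)) (1 : ℚ) else 0)
      = if i = 0 then Finsupp.single (B.I (rho N k a)) (1 : ℚ) else 0 := by
    intro i
    by_cases h : i = 0
    · rw [Finset.sum_congr rfl (fun j _ => if_congr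
        (show (i = 0 ∧ j = k - 1) ↔ j = k - 1 by simp [h]) rfl rfl),
        Finset.sum_ite_eq' (Finset.range k) (k - 1), if_pos (Finset.mem_range.mpr (by omega)),
        if_pos h]
    · rw [Finset.sum_congr rfl (fun j _ => if_neg (by tauto)), if_neg h]
      simp
  rw [Finset.sum_congr rfl (fun i _ => hin i)]
  rw [Finset.sum_ite_eq' (Finset.range k) 0, if_pos (Finset.mem_range.mpr (by omega))]
  show iotaL N k (if a - 1 = a then _ else if a - 1 = a + 1 then _ else
    if a - 1 = a - 1 then _ else _) = _
  rw [if_neg (sub_one_ne hN a), if_neg (fun h => add_ne_sub hN a h.symm), if_pos rfl,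
    iotaL_single, one_smul, iotaB]

lemma ptSS_gen (hN : 3 ≤ N) (hk : 1 ≤ k) (a b : ZMod N)
    (hb1 : ¬ b = a) (hb2 : ¬ b = a + 1) (hb3 : ¬ b = a - 1) {i j : ℕ}
    (hi : i < k) (hj : j < k) :
    muL (N * k) (Finsupp.single (B.S (rho N k a + (i : ZMod (N * k)))) (1 : ℚ))
        (Finsupp.single (B.S (rho N k b + (j : ZMod (N * k)))) (1 : ℚ)) = 0 := by
  rw [muL_single_single, one_mul, one_smul]
  have h0 : ¬ (rho N k b + (j : ZMod (N * k)) = rho N k a + (i : ZMod (N * k))) :=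
    fun h => hb1 ((keyE hN hk hj hi).mp h).1
  have h1 : ¬ (rho N k b + (j : ZMod (N * k)) = rho N k a + (i : ZMod (N * k)) + 1) := by
    rcases eq_or_lt_of_le (show i + 1 ≤ k by omega) with hik | hik
    · rw [eq_comm, keyB hN hk hik hj]
      rintro ⟨h, -⟩
      exact hb2 h.symm
    · rw [eq_comm, keyA hN hk hik hj]
      rintro ⟨h, -⟩
      exact hb1 h.symm
  have h2 : ¬ (rho N k b + (j : ZMod (N * k)) = rho N k a + (i : ZMod (N * k)) - 1) := by
    rw [eq_sub_iff_add_eq]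
    rcases eq_or_lt_of_le (show j + 1 ≤ k by omega) with hjk | hjk
    · rw [keyB hN hk hjk hi]
      rintro ⟨h, -⟩
      exact hb3 (eq_sub_iff_add_eq.mpr h)
    · rw [keyA hN hk hjk hi]
      rintro ⟨h, -⟩
      exact hb1 h
  simp only [B.muB]
  rw [if_neg h0, if_neg h1, if_neg h2]

lemma muSS_gen (hN : 3 ≤ N) (hk : 1 ≤ k) (a b : ZMod N)
    (hb1 : ¬ b = a) (hb2 : ¬ b = a + 1) (hb3 : ¬ b = a - 1) :
    iotaL N k (B.muB (B.S a) (B.S b))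
      = muL (N * k) (iotaB N k (B.S a)) (iotaB N k (B.S b)) := by
  simp only [iotaB]
  rw [muL_sum_left]
  rw [Finset.sum_congr rfl (fun i _ => muL_sum_right _ _ _)]
  rw [Finset.sum_congr rfl (fun i hi => Finset.sum_congr rfl
    (fun j hj => ptSS_gen hN hk a b hb1 hb2 hb3 (Finset.mem_range.mp hi)
      (Finset.mem_range.mp hj)))]
  show iotaL N k (if b = a then _ else if b = a + 1 then _ else if b = a - 1 then _ else _) = _
  rw [if_neg hb1, if_neg hb2, if_neg hb3, map_zero]
  simp

lemma muSS (hN : 3 ≤ N) (hk : 1 ≤ k) (a b : ZMod N) :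
    iotaL N k (B.muB (B.S a) (B.S b)) = muL (N * k) (iotaB N k (B.S a)) (iotaB N k (B.S b)) := by
  by_cases h1 : b = a
  · subst h1
    exact muSS_diag hN hk b
  · by_cases h2 : b = a + 1
    · subst h2
      exact muSS_succ hN hk a
    · by_cases h3 : b = a - 1
      · subst h3
        exact muSS_pred hN hk a
      · exact muSS_gen hN hk a b h1 h2 h3

end SSCase

/-! #### The master one-dimensional lemmas -/

lemma iotaL_muB {N k : ℕ} (hN : 3 ≤ N) (hk : 1 ≤ k) (u v : B N) :
    iotaL N k (B.muB u v) = muL (N * k) (iotaB N k u) (iotaB N k v) := by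
  cases u with
  | P a =>
    cases v with
    | P b => exact muPP hN hk a b
    | S b => exact muPS hN hk a b
    | I b => exact muPI hN hk a b
  | S a =>
    cases v with
    | P b => exact muSP hN hk b a
    | S b => exact muSS hN hk a b
    | I b => exact muSI hN hk a b
  | I a =>
    cases v with
    | P b => exact muIP hN hk b a
    | S b => exact muIS hN hk b a
    | I b => exact muII hN hk a b

lemma iotaL_bdB {N k : ℕ} (hN : 3 ≤ N) (hk : 1 ≤ k) (u : B N) :
    iotaL N k (B.bdB u) = bdL (N * k) (iotaB N k u) := by
  cases u with
  | P a =>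
    show iotaL N k 0 = bdL (N * k) (Finsupp.single (B.P (rho N k a)) 1)
    rw [map_zero, bdL_single, one_smul]
    rfl
  | I a =>
    show iotaL N k 0 = bdL (N * k) (Finsupp.single (B.I (rho N k a)) 1)
    rw [map_zero, bdL_single, one_smul]
    rfl
  | S a =>
    show iotaL N k (Finsupp.single (B.P (a + 1)) 1 - Finsupp.single (B.P a) 1)
      = bdL (N * k) (∑ j ∈ Finset.range k,
          Finsupp.single (B.S (rho N k a + (j : ZMod (N * k)))) 1)
    rw [map_sub, map_sum, iotaL_single, iotaL_single, one_smul, one_smul]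
    rw [Finset.sum_congr rfl (fun j _ => bdL_single _ _)]
    rw [Finset.sum_congr rfl (fun j _ => one_smul ℚ _)]
    have hpt : ∀ j ∈ Finset.range k,
        B.bdB (B.S (rho N k a + (j : ZMod (N * k))))
          = (fun m : ℕ => Finsupp.single (B.P (rho N k a + (m : ZMod (N * k)))) (1 : ℚ)) (j + 1)
            - (fun m : ℕ => Finsupp.single (B.P (rho N k a + (m : ZMod (N * k)))) (1 : ℚ)) j := by
      intro j _
      show Finsupp.single (B.P (rho N k a + (j : ZMod (N * k)) + 1)) 1 - _ = _
      have : rho N k a + (j : ZMod (N * k)) + 1 = rho N k a + ((j + 1 : ℕ) : ZMod (N * k)) := by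
        push_cast
        ring
      rw [this]
    rw [Finset.sum_congr rfl hpt, Finset.sum_range_sub
      (fun m : ℕ => Finsupp.single (B.P (rho N k a + (m : ZMod (N * k)))) (1 : ℚ)) k]
    rw [rho_zero]
    simp only [iotaB]
    rw [rho_add_one hN hk]

/-! ### Three-dimensional machinery -/

section ThreeD

variable {M : ℕ}

/-- Span of basis vectors of a fixed codimension. -/
noncomputable def homog (M c : ℕ) : Submodule ℚ (EC M) :=
  Submodule.span ℚ {x | ∃ w : B M, B.cod w = c ∧ x = Finsupp.single w 1}

lemma iotaB_mem_homog {N k : ℕ} (u : B N) : iotaB N k u ∈ homog (N * k) u.cod := by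
  cases u with
  | P a => exact Submodule.subset_span ⟨B.P (rho N k a), rfl, rfl⟩
  | I a => exact Submodule.subset_span ⟨B.I (rho N k a), rfl, rfl⟩
  | S a =>
    exact Submodule.sum_mem _ fun j _ =>
      Submodule.subset_span ⟨B.S (rho N k a + (j : ZMod (N * k))), rfl, rfl⟩

lemma t3L_add₁ (x x' y z : EC M) :
    t3L M (x + x') y z = t3L M x y z + t3L M x' y z := by
  rw [map_add, LinearMap.add_apply, LinearMap.add_apply]

lemma t3L_smul₁ (c : ℚ) (x y z : EC M) :
    t3L M (c • x) y z = c • t3L M x y z := by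
  rw [map_smul, LinearMap.smul_apply, LinearMap.smul_apply]

lemma t3L_add₂ (x y y' z : EC M) :
    t3L M x (y + y') z = t3L M x y z + t3L M x y' z := by
  rw [map_add, LinearMap.add_apply]

lemma t3L_smul₂ (c : ℚ) (x y z : EC M) :
    t3L M x (c • y) z = c • t3L M x y z := by
  rw [map_smul, LinearMap.smul_apply]

lemma t3L_add₃ (x y z z' : EC M) :
    t3L M x y (z + z') = t3L M x y z + t3L M x y z' := map_add _ _ _

lemma t3L_smul₃ (c : ℚ) (x y z : EC M) :
    t3L M x y (c • z) = c • t3L M x y z := map_smul _ _ _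

lemma t3L_zero₁ (y z : EC M) : t3L M 0 y z = 0 := by
  rw [map_zero, LinearMap.zero_apply, LinearMap.zero_apply]

lemma t3L_zero₂ (x z : EC M) : t3L M x 0 z = 0 := by
  rw [map_zero, LinearMap.zero_apply]

lemma t3L_zero₃ (x y : EC M) : t3L M x y 0 = 0 := map_zero _

lemma muL_zero₁ (y : EC M) : muL M 0 y = 0 := by
  rw [map_zero, LinearMap.zero_apply]

lemma muL_zero₂ (x : EC M) : muL M x 0 = 0 := map_zero _

lemma iota3L_t3 {N k : ℕ} (x y z : EC N) :
    iota3L N k (t3 x y z) = t3L (N * k) (iotaL N k x) (iotaL N k y) (iotaL N k z) := by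
  rw [t3_eq]
  induction x using Finsupp.induction_linear with
  | zero => rw [t3L_zero₁, map_zero, map_zero, t3L_zero₁]
  | add f g hf hg => rw [t3L_add₁, map_add, hf, hg, map_add, t3L_add₁]
  | single a b =>
    induction y using Finsupp.induction_linear with
    | zero => rw [t3L_zero₂, map_zero, map_zero, t3L_zero₂]
    | add f g hf hg => rw [t3L_add₂, map_add, hf, hg, map_add, t3L_add₂]
    | single a' b' =>
      induction z using Finsupp.induction_linear with
      | zero => rw [t3L_zero₃, map_zero, map_zero, t3L_zero₃]
      | add f g hf hg => rw [t3L_add₃, map_add, hf, hg, map_add, t3L_add₃]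
      | single a'' b'' =>
        rw [t3L_single, map_smul, iota3L_single, one_smul, iotaL_single, iotaL_single,
          iotaL_single, t3L_smul₁, t3L_smul₂, t3L_smul₃, t3_eq, smul_smul, smul_smul,
          mul_assoc]

lemma bd3_t3_hom {c₁ c₂ c₃ : ℕ} (x y z : EC M)
    (hx : x ∈ homog M c₁) (hy : y ∈ homog M c₂) (hz : z ∈ homog M c₃) :
    bd3L M (t3L M x y z)
      = t3L M (bdL M x) y z + ((-1 : ℚ) ^ c₁) • t3L M x (bdL M y) z
        + ((-1 : ℚ) ^ (c₁ + c₂)) • t3L M x y (bdL M z) := by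
  induction hx using Submodule.span_induction with
  | zero => simp [t3L_zero₁, t3L_zero₂, t3L_zero₃]
  | add u v hu hv ihu ihv =>
    have hb : bdL M (u + v) = bdL M u + bdL M v := map_add _ _ _
    rw [t3L_add₁, map_add, ihu, ihv, hb, t3L_add₁, t3L_add₁, t3L_add₁, smul_add, smul_add]
    abel
  | smul c u hu ihu =>
    have hb : bdL M (c • u) = c • bdL M u := map_smul _ _ _
    rw [t3L_smul₁, map_smul, ihu, hb, t3L_smul₁, t3L_smul₁, t3L_smul₁]
    module
  | mem x hx =>
    obtain ⟨w₁, hw₁, rfl⟩ := hx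
    induction hy using Submodule.span_induction with
    | zero => simp [t3L_zero₁, t3L_zero₂, t3L_zero₃]
    | add u v hu hv ihu ihv =>
      have hb : bdL M (u + v) = bdL M u + bdL M v := map_add _ _ _
      rw [t3L_add₂, map_add, ihu, ihv, hb, t3L_add₂, t3L_add₂, t3L_add₂, smul_add, smul_add]
      abel
    | smul c u hu ihu =>
      have hb : bdL M (c • u) = c • bdL M u := map_smul _ _ _
      rw [t3L_smul₂, map_smul, ihu, hb, t3L_smul₂, t3L_smul₂, t3L_smul₂]
      module
    | mem y hy =>
      obtain ⟨w₂, hw₂, rfl⟩ := hy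
      induction hz using Submodule.span_induction with
      | zero => simp [t3L_zero₁, t3L_zero₂, t3L_zero₃]
      | add u v hu hv ihu ihv =>
        have hb : bdL M (u + v) = bdL M u + bdL M v := map_add _ _ _
        rw [t3L_add₃, map_add, ihu, ihv, hb, t3L_add₃, t3L_add₃, t3L_add₃, smul_add, smul_add]
        abel
      | smul c u hu ihu =>
        have hb : bdL M (c • u) = c • bdL M u := map_smul _ _ _
        rw [t3L_smul₃, map_smul, ihu, hb, t3L_smul₃, t3L_smul₃, t3L_smul₃]
        module
      | mem z hz =>
        obtain ⟨w₃, hw₃, rfl⟩ := hz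
        rw [t3L_single, one_mul, one_mul, one_smul, bd3L_single]
        simp only [bd3B, B.e]
        rw [t3_eq, t3_eq, t3_eq]
        simp only [bdL_single, one_smul]
        show t3L M (B.bdB w₁) _ _ + ((-1:ℚ) ^ w₁.cod) • _ + ((-1:ℚ) ^ (w₁.cod + w₂.cod)) • _ = _
        rw [hw₁, hw₂]

lemma mu3L_sign_t3 {c₁ c₂ c₃ d₁ d₂ d₃ : ℕ} (x₁ x₂ x₃ y₁ y₂ y₃ : EC M)
    (hx₁ : x₁ ∈ homog M c₁) (hx₂ : x₂ ∈ homog M c₂) (hx₃ : x₃ ∈ homog M c₃)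
    (hy₁ : y₁ ∈ homog M d₁) (hy₂ : y₂ ∈ homog M d₂) (hy₃ : y₃ ∈ homog M d₃) :
    mu3L M (t3L M x₁ x₂ x₃) (t3L M y₁ y₂ y₃)
      = ((-1 : ℚ) ^ (c₂ * d₁ + c₃ * d₁ + c₃ * d₂)) •
          t3L M (muL M x₁ y₁) (muL M x₂ y₂) (muL M x₃ y₃) := by
  induction hx₁ using Submodule.span_induction with
  | zero => simp [t3L_zero₁, t3L_zero₂, t3L_zero₃, muL_zero₁, muL_zero₂]
  | add u v hu hv ihu ihv =>
    have hm : muL M (u + v) y₁ = muL M u y₁ + muL M v y₁ := by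
      rw [map_add, LinearMap.add_apply]
    rw [t3L_add₁, map_add, LinearMap.add_apply, ihu, ihv, hm, t3L_add₁, smul_add]
  | smul c u hu ihu =>
    have hm : muL M (c • u) y₁ = c • muL M u y₁ := by
      rw [map_smul, LinearMap.smul_apply]
    rw [t3L_smul₁, map_smul, LinearMap.smul_apply, ihu, hm, t3L_smul₁, smul_comm]
  | mem x₁' hx₁' =>
    obtain ⟨w₁, hw₁, rfl⟩ := hx₁'
    induction hx₂ using Submodule.span_induction with
    | zero => simp [t3L_zero₁, t3L_zero₂, t3L_zero₃, muL_zero₁, muL_zero₂]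
    | add u v hu hv ihu ihv =>
      rw [t3L_add₂, map_add, LinearMap.add_apply, ihu, ihv, ← smul_add, ← t3L_add₂]
      have hm : muL M (u + v) y₂ = muL M u y₂ + muL M v y₂ := by
        rw [map_add, LinearMap.add_apply]
      rw [hm]
    | smul c u hu ihu =>
      rw [t3L_smul₂, map_smul, LinearMap.smul_apply, ihu, smul_comm]
      have hm : muL M (c • u) y₂ = c • muL M u y₂ := by
        rw [map_smul, LinearMap.smul_apply]
      rw [hm, t3L_smul₂]
    | mem x₂' hx₂' =>
      obtain ⟨w₂, hw₂, rfl⟩ := hx₂'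
      induction hx₃ using Submodule.span_induction with
      | zero => simp [t3L_zero₁, t3L_zero₂, t3L_zero₃, muL_zero₁, muL_zero₂]
      | add u v hu hv ihu ihv =>
        rw [t3L_add₃, map_add, LinearMap.add_apply, ihu, ihv, ← smul_add, ← t3L_add₃]
        have hm : muL M (u + v) y₃ = muL M u y₃ + muL M v y₃ := by
          rw [map_add, LinearMap.add_apply]
        rw [hm]
      | smul c u hu ihu =>
        rw [t3L_smul₃, map_smul, LinearMap.smul_apply, ihu, smul_comm]
        have hm : muL M (c • u) y₃ = c • muL M u y₃ := by
          rw [map_smul, LinearMap.smul_apply]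
        rw [hm, t3L_smul₃]
      | mem x₃' hx₃' =>
        obtain ⟨w₃, hw₃, rfl⟩ := hx₃'
        induction hy₁ using Submodule.span_induction with
        | zero => simp [t3L_zero₁, t3L_zero₂, t3L_zero₃, muL_zero₁, muL_zero₂]
        | add u v hu hv ihu ihv =>
          have hm : muL M (Finsupp.single w₁ (1:ℚ)) (u + v)
              = muL M (Finsupp.single w₁ 1) u + muL M (Finsupp.single w₁ 1) v := map_add _ _ _
          rw [t3L_add₁, map_add, ihu, ihv, hm, t3L_add₁, smul_add]
        | smul c u hu ihu =>
          have hm : muL M (Finsupp.single w₁ (1:ℚ)) (c • u)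
              = c • muL M (Finsupp.single w₁ 1) u := map_smul _ _ _
          rw [t3L_smul₁, map_smul, ihu, hm, t3L_smul₁, smul_comm]
        | mem y₁' hy₁' =>
          obtain ⟨v₁, hv₁, rfl⟩ := hy₁'
          induction hy₂ using Submodule.span_induction with
          | zero => simp [t3L_zero₁, t3L_zero₂, t3L_zero₃, muL_zero₁, muL_zero₂]
          | add u v hu hv ihu ihv =>
            have hm : muL M (Finsupp.single w₂ (1:ℚ)) (u + v)
                = muL M (Finsupp.single w₂ 1) u + muL M (Finsupp.single w₂ 1) v := map_add _ _ _
            rw [t3L_add₂, map_add, ihu, ihv, hm, t3L_add₂, smul_add]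
          | smul c u hu ihu =>
            have hm : muL M (Finsupp.single w₂ (1:ℚ)) (c • u)
                = c • muL M (Finsupp.single w₂ 1) u := map_smul _ _ _
            rw [t3L_smul₂, map_smul, ihu, hm, t3L_smul₂, smul_comm]
          | mem y₂' hy₂' =>
            obtain ⟨v₂, hv₂, rfl⟩ := hy₂'
            induction hy₃ using Submodule.span_induction with
            | zero => simp [t3L_zero₁, t3L_zero₂, t3L_zero₃, muL_zero₁, muL_zero₂]
            | add u v hu hv ihu ihv =>
              have hm : muL M (Finsupp.single w₃ (1:ℚ)) (u + v)
                  = muL M (Finsupp.single w₃ 1) u + muL M (Finsupp.single w₃ 1) v := map_add _ _ _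
              rw [t3L_add₃, map_add, ihu, ihv, hm, t3L_add₃, smul_add]
            | smul c u hu ihu =>
              have hm : muL M (Finsupp.single w₃ (1:ℚ)) (c • u)
                  = c • muL M (Finsupp.single w₃ 1) u := map_smul _ _ _
              rw [t3L_smul₃, map_smul, ihu, hm, t3L_smul₃, smul_comm]
            | mem y₃' hy₃' =>
              obtain ⟨v₃, hv₃, rfl⟩ := hy₃'
              rw [t3L_single, t3L_single, one_mul, one_mul, one_smul, one_smul,
                mu3L_single_single, one_mul, one_smul]
              show ((-1 : ℚ) ^ (w₂.cod * v₁.cod + w₃.cod * v₁.cod + w₃.cod * v₂.cod)) •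
                t3 (B.muB w₁ v₁) (B.muB w₂ v₂) (B.muB w₃ v₃) = _
              rw [hw₂, hw₃, hv₁, hv₂, t3_eq]
              have e : ∀ u v : B M, muL M (Finsupp.single u (1:ℚ)) (Finsupp.single v 1)
                  = B.muB u v := fun u v => by rw [muL_single_single, one_mul, one_smul]
              rw [e, e, e]

end ThreeD

/-- the three-dimensional crumbling map commutes with the boundary
operator and with the intersection product. -/
theorem iota3_comm_bd3_mu3 (N : ℕ) (hN : 3 ≤ N) (k : ℕ) (hk : 1 ≤ k) :
    (∀ x : E3 N, iota3 N k (bd3 x) = bd3 (iota3 N k x)) ∧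
    (∀ x y : E3 N, iota3 N k (mu3 x y) = mu3 (iota3 N k x) (iota3 N k y)) := by
  have he : ∀ v : B N, iotaL N k (B.e v) = iotaB N k v := fun v => by
    rw [B.e, iotaL_single, one_smul]
  have core_bd : ∀ u : B3 N, iota3L N k (bd3B u)
      = bd3L (N * k) (t3 (iotaB N k u.1) (iotaB N k u.2.1) (iotaB N k u.2.2)) := by
    rintro ⟨u₁, u₂, u₃⟩
    rw [t3_eq, bd3_t3_hom _ _ _ (iotaB_mem_homog u₁) (iotaB_mem_homog u₂) (iotaB_mem_homog u₃)]
    rw [← iotaL_bdB hN hk u₁, ← iotaL_bdB hN hk u₂, ← iotaL_bdB hN hk u₃]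
    simp only [bd3B, map_add, map_smul, iota3L_t3, he]
  have core_mu : ∀ u v : B3 N, iota3L N k (mu3B u v)
      = mu3L (N * k) (t3 (iotaB N k u.1) (iotaB N k u.2.1) (iotaB N k u.2.2))
          (t3 (iotaB N k v.1) (iotaB N k v.2.1) (iotaB N k v.2.2)) := by
    rintro ⟨u₁, u₂, u₃⟩ ⟨v₁, v₂, v₃⟩
    rw [t3_eq, t3_eq, mu3L_sign_t3 _ _ _ _ _ _ (iotaB_mem_homog u₁) (iotaB_mem_homog u₂)
      (iotaB_mem_homog u₃) (iotaB_mem_homog v₁) (iotaB_mem_homog v₂) (iotaB_mem_homog v₃)]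
    rw [← iotaL_muB hN hk u₁ v₁, ← iotaL_muB hN hk u₂ v₂, ← iotaL_muB hN hk u₃ v₃]
    simp only [mu3B, map_smul, iota3L_t3]
  constructor
  · intro x
    rw [bd3_eq, iota3_eq, iota3_eq, bd3_eq]
    induction x using Finsupp.induction_linear with
    | zero => simp only [map_zero]
    | add f g hf hg => rw [map_add, map_add, hf, hg, map_add, map_add]
    | single u c =>
      rw [bd3L_single, map_smul, iota3L_single, map_smul, core_bd u]
  · intro x y
    rw [mu3_eq, iota3_eq, iota3_eq, iota3_eq, mu3_eq]
    induction x using Finsupp.induction_linear with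
    | zero => simp only [map_zero, LinearMap.zero_apply]
    | add f g hf hg => simp only [map_add, LinearMap.add_apply, hf, hg]
    | single u c =>
      induction y using Finsupp.induction_linear with
      | zero => simp only [map_zero]
      | add f g hf hg => simp only [map_add, hf, hg]
      | single v d =>
        rw [mu3L_single_single, map_smul, core_mu u v, iota3L_single, iota3L_single,
          map_smul]
        have hm : mu3L (N * k) (c • t3 (iotaB N k u.1) (iotaB N k u.2.1) (iotaB N k u.2.2))
            = c • mu3L (N * k) (t3 (iotaB N k u.1) (iotaB N k u.2.1) (iotaB N k u.2.2)) :=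
          map_smul _ _ _
        rw [hm, LinearMap.smul_apply, smul_smul, mul_comm d c]
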